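/- Let mo and rb be relations on events with moi ⊆ po-derivable: specifically assume po|loc;⦗E \ R⦘ ⊆ ppo_asm, moi ∪ rbi ⊆ po|loc;⦗E \ R⦘, and acyclic(ppo_asm ∪ eco) where eco = (rfe ∪ mo ∪ rb)⁺. Then po;moi is irreflexive. -/
import Mathlib

/-- given `po|loc;⦗E \ R⦘ ⊆ ppo_asm`,
`moi ∪ rbi ⊆ po|loc;⦗E \ R⦘`, well-formedness of `mo` (same-location,
write-domain), and acyclicity of `ppo_asm ∪ eco` with
`eco = (rfe ∪ mo ∪ rb)⁺`, the relation `po;moi` is irreflexive. -/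
theorem stmt12 {α : Type*} (po ppoasm rfe mo rb moi rbi : α → α → Prop)
    (Rd : Set α) (loc : α → ℕ)
    (hLocPpo : ∀ a b, po a b → loc a = loc b → b ∉ Rd → ppoasm a b)
    (hInt : ∀ a b, (moi a b ∨ rbi a b) → po a b ∧ loc a = loc b ∧ b ∉ Rd)
    (hmoiMo : ∀ a b, moi a b → mo a b)
    (hrbiRb : ∀ a b, rbi a b → rb a b)
    (hMoLoc : ∀ a b, mo a b → loc a = loc b)
    (hMoDom : ∀ a b, mo a b → a ∉ Rd)
    (hAcyc : Irreflexive (Relation.TransGen (fun a b =>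
      ppoasm a b ∨ Relation.TransGen (fun x y => rfe x y ∨ mo x y ∨ rb x y) a b))) :
    Irreflexive (fun a b => ∃ c, po a c ∧ moi c b) := by
  intro a ⟨c, hpo, hmoi⟩
  obtain ⟨hpoca, hloc, haRd⟩ := hInt c a (Or.inl hmoi)
  have hmo := hmoiMo c a hmoi
  have hcRd := hMoDom c a hmo
  have h1 : ppoasm a c := hLocPpo a c hpo hloc.symm hcRd
  have h2 : ppoasm c a := hLocPpo c a hpoca hloc haRd
  exact hAcyc a (Relation.TransGen.head (Or.inl h1) (Relation.TransGen.single (Or.inl h2)))
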